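/- If (EWₙ) is a positive semidefinite d×d matrix whose eigenvalues satisfy λᵢ ≤ C·σ²/iᵖ for some p > 1 and constant C > 0, and p(t) := min(−t, 1), then tr p(−(t/σ²)·EWₙ) ≤ min(d, c·t^{1/p}) for all t > 0, where c depends only on C and p. -/

import Mathlib

open Matrix
open scoped ComplexOrder

/-- Spectral functional calculus for Hermitian matrices (junk value `0` otherwise). -/
noncomputable def matFun {d : ℕ} (f : ℝ → ℝ) (A : Matrix (Fin d) (Fin d) ℂ) :
    Matrix (Fin d) (Fin d) ℂ :=
  if hA : A.IsHermitian then
    (hA.eigenvectorUnitary : Matrix (Fin d) (Fin d) ℂ) *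
      Matrix.diagonal (fun i => (f (hA.eigenvalues i) : ℂ)) *
      (hA.eigenvectorUnitary : Matrix (Fin d) (Fin d) ℂ)ᴴ
  else 0

lemma matFun_smul_trace_re {d : ℕ} (f : ℝ → ℝ) (hf : Continuous f) (r : ℝ)
    (A : Matrix (Fin d) (Fin d) ℂ) (hA : A.IsHermitian) :
    (matFun f (r • A)).trace.re = ∑ i, f (r * hA.eigenvalues i) := by
  have hA' : IsSelfAdjoint A := hA
  have hrA' : IsSelfAdjoint (r • A) := IsSelfAdjoint.smul (star_trivial r) hA'
  have hrA : (r • A).IsHermitian := hrA'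
  have h1 : matFun f (r • A) = cfc f (r • A) := by
    rw [matFun, dif_pos hrA, hrA.cfc_eq]
    rfl
  have h2 : cfc f (r • A) = cfc (fun x : ℝ => f (r • x)) A :=
    (cfc_comp_smul r f A hf.continuousOn hA').symm
  have h3 : cfc (fun x : ℝ => f (r • x)) A = hA.cfc (fun x : ℝ => f (r • x)) :=
    hA.cfc_eq _
  rw [h1, h2, h3, Matrix.IsHermitian.cfc, Unitary.conjStarAlgAut_apply, Matrix.trace_mul_cycle,
    Matrix.UnitaryGroup.star_mul_self, one_mul, Matrix.trace_diagonal]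
  simp [smul_eq_mul]

lemma aux_core {s q : ℝ} (hs : 1 ≤ s) (hq : 0 < q) :
    1 + q * ((s - 1) / s) ≤ s ^ q := by
  have hs0 : (0:ℝ) < s := lt_of_lt_of_le one_pos hs
  rcases le_total 1 q with hq1 | hq1
  · have h := one_add_mul_self_le_rpow_one_add (s := s - 1) (by linarith) hq1
    have h2 : q * ((s - 1) / s) ≤ q * (s - 1) := by
      apply mul_le_mul_of_nonneg_left _ hq.le
      rw [div_le_iff₀ hs0]
      nlinarith
    calc 1 + q * ((s - 1) / s) ≤ 1 + q * (s - 1) := by linarith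
      _ ≤ (1 + (s - 1)) ^ q := h
      _ = s ^ q := by ring_nf
  · have hw : (0:ℝ) < 1/s := by positivity
    have h := rpow_one_add_le_one_add_mul_self (s := 1/s - 1)
      (by have := hw; linarith) hq.le hq1
    have h' : (1/s) ^ q ≤ 1 - q * ((s-1)/s) := by
      have e0 : 1 + (1/s - 1) = 1/s := by ring
      rw [e0] at h
      have e : 1/s - 1 = -((s-1)/s) := by field_simp; ring
      calc (1/s) ^ q ≤ 1 + q * (1/s - 1) := h
        _ = 1 - q * ((s-1)/s) := by rw [e]; ring
    have hne : (1/s) ^ q = (s ^ q)⁻¹ := by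
      rw [one_div, Real.inv_rpow hs0.le]
    have hspos : (0:ℝ) < s ^ q := Real.rpow_pos_of_pos hs0 q
    have hpos : (0:ℝ) < (s ^ q)⁻¹ := by positivity
    rw [hne] at h'
    set z := q * ((s-1)/s) with hzdef
    have h1z : 0 < 1 - z := lt_of_lt_of_le hpos h'
    have hmul := mul_le_mul_of_nonneg_left h' hspos.le
    rw [mul_inv_cancel₀ (ne_of_gt hspos)] at hmul
    nlinarith [sq_nonneg z, mul_le_mul_of_nonneg_right hmul (le_of_lt h1z)]

lemma aux_A {p : ℝ} (hp : 1 < p) {u : ℝ} (hu : 0 < u) :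
    (p - 1) / (u + 1) ^ p ≤ u ^ (1 - p) - (u + 1) ^ (1 - p) := by
  have hu1 : (0:ℝ) < u + 1 := by linarith
  have hq : 0 < p - 1 := by linarith
  have hs : 1 ≤ (u + 1) / u := by rw [le_div_iff₀ hu]; linarith
  have h := aux_core hs hq
  have e1 : ((u+1)/u - 1) / ((u+1)/u) = 1 / (u+1) := by
    field_simp; ring
  rw [e1] at h
  rw [Real.div_rpow hu1.le hu.le] at h
  have hup : (0:ℝ) < u ^ (p-1) := Real.rpow_pos_of_pos hu _
  have hup1 : (0:ℝ) < (u+1) ^ (p-1) := Real.rpow_pos_of_pos hu1 _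
  have hkey : (u + 1 + (p-1)) * u^(p-1) ≤ (u+1)^(p-1) * (u+1) := by
    have h2 := mul_le_mul_of_nonneg_right h (le_of_lt (mul_pos hup hu1))
    calc (u + 1 + (p-1)) * u^(p-1)
        = (1 + (p-1) * (1/(u+1))) * (u^(p-1) * (u+1)) := by field_simp
      _ ≤ (u+1)^(p-1)/u^(p-1) * (u^(p-1) * (u+1)) := h2
      _ = (u+1)^(p-1) * (u+1) := by field_simp
  have eu : u ^ (1-p) = (u ^ (p-1))⁻¹ := by
    rw [show (1-p) = -(p-1) by ring, Real.rpow_neg hu.le]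
  have eu1 : (u+1) ^ (1-p) = ((u+1) ^ (p-1))⁻¹ := by
    rw [show (1-p) = -(p-1) by ring, Real.rpow_neg hu1.le]
  have ep : (u+1) ^ p = (u+1) ^ (p-1) * (u+1) := by
    rw [← Real.rpow_add_one (ne_of_gt hu1), sub_add_cancel]
  rw [eu, eu1, ep]
  set X := u ^ (p-1)
  set Y := (u+1) ^ (p-1)
  have e3 : X⁻¹ - Y⁻¹ = (Y - X)/(X*Y) := by
    field_simp
  rw [e3, div_le_div_iff₀ (by positivity) (by positivity)]
  nlinarith [mul_le_mul_of_nonneg_right hkey hup1.le, mul_pos hup hup1]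

lemma aux_sum {p : ℝ} (hp : 1 < p) {b : ℝ} (hb : 0 < b) (d : ℕ) :
    ∑ i ∈ Finset.range d, (p - 1) / ((i : ℝ) + b + 1) ^ p ≤ b ^ (1 - p) := by
  have key : ∑ i ∈ Finset.range d, (p - 1) / ((i : ℝ) + b + 1) ^ p
      ≤ ∑ i ∈ Finset.range d,
          (((i : ℝ) + b) ^ (1 - p) - (((i + 1 : ℕ) : ℝ) + b) ^ (1 - p)) := by
    apply Finset.sum_le_sum
    intro i _
    have hu : (0:ℝ) < (i : ℝ) + b := by positivity
    have := aux_A hp hu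
    push_cast
    calc (p - 1) / ((i : ℝ) + b + 1) ^ p
        = (p - 1) / (((i : ℝ) + b) + 1) ^ p := by ring_nf
      _ ≤ ((i : ℝ) + b) ^ (1-p) - (((i : ℝ) + b) + 1) ^ (1-p) := this
      _ = ((i : ℝ) + b) ^ (1-p) - (((i : ℝ) + 1) + b) ^ (1-p) := by ring_nf
  rw [Finset.sum_range_sub' (fun i => (((i : ℕ) : ℝ) + b) ^ (1 - p)) d] at key
  have h2 : (0:ℝ) ≤ (((d : ℕ) : ℝ) + b) ^ (1 - p) := by positivity
  simp only [Nat.cast_zero, zero_add] at key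
  linarith

lemma aux_C {p : ℝ} (hp : 1 < p) {a : ℝ} (ha : 0 < a) (i : ℕ) :
    min (a / ((i : ℝ) + 1) ^ p) 1 ≤ 2 ^ p * a / ((i : ℝ) + a ^ (1/p) + 1) ^ p := by
  have hp0 : p ≠ 0 := by positivity
  set b := a ^ (1/p) with hbdef
  have hb : 0 < b := Real.rpow_pos_of_pos ha _
  have hbp : b ^ p = a := by
    rw [hbdef, ← Real.rpow_mul ha.le, one_div, inv_mul_cancel₀ hp0, Real.rpow_one]
  have hi1 : (0:ℝ) < (i : ℝ) + 1 := by positivity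
  have hib : (0:ℝ) < (i : ℝ) + b + 1 := by positivity
  rcases le_total b ((i : ℝ) + 1) with hc | hc
  · refine le_trans (min_le_left _ _) ?_
    rw [div_le_div_iff₀ (by positivity) (by positivity)]
    have h1 : (i : ℝ) + b + 1 ≤ 2 * ((i : ℝ) + 1) := by linarith
    have h2 : ((i : ℝ) + b + 1) ^ p ≤ (2 * ((i : ℝ) + 1)) ^ p :=
      Real.rpow_le_rpow hib.le h1 (by positivity)
    rw [Real.mul_rpow (by norm_num) hi1.le] at h2
    nlinarith [Real.rpow_pos_of_pos hi1 p, Real.rpow_pos_of_pos (show (0:ℝ)<2 by norm_num) p,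
      Real.rpow_nonneg (show (0:ℝ) ≤ 2 by norm_num) p]
  · refine le_trans (min_le_right _ _) ?_
    rw [le_div_iff₀ (by positivity), one_mul]
    have h1 : (i : ℝ) + b + 1 ≤ 2 * b := by linarith
    have h2 : ((i : ℝ) + b + 1) ^ p ≤ (2 * b) ^ p :=
      Real.rpow_le_rpow hib.le h1 (by positivity)
    rw [Real.mul_rpow (by norm_num) hb.le, hbp] at h2
    linarith

lemma aux_main {p : ℝ} (hp : 1 < p) {a : ℝ} (ha : 0 < a) (d : ℕ) :
    ∑ i ∈ Finset.range d, min (a / ((i : ℝ) + 1) ^ p) 1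
      ≤ 2 ^ p / (p - 1) * a ^ (1/p) := by
  have hq : (0:ℝ) < p - 1 := by linarith
  set b := a ^ (1/p) with hbdef
  have hb : 0 < b := Real.rpow_pos_of_pos ha _
  have hbp : b ^ p = a := by
    rw [hbdef, ← Real.rpow_mul ha.le, one_div, inv_mul_cancel₀ (by positivity : p ≠ 0),
      Real.rpow_one]
  have h2p : (0:ℝ) < 2 ^ p := Real.rpow_pos_of_pos (by norm_num) p
  calc ∑ i ∈ Finset.range d, min (a / ((i : ℝ) + 1) ^ p) 1
      ≤ ∑ i ∈ Finset.range d, 2 ^ p * a / ((i : ℝ) + b + 1) ^ p :=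
        Finset.sum_le_sum fun i _ => aux_C hp ha i
    _ = (2 ^ p * a / (p - 1)) * ∑ i ∈ Finset.range d, (p - 1) / ((i : ℝ) + b + 1) ^ p := by
        rw [Finset.mul_sum]
        apply Finset.sum_congr rfl
        intro i _
        have : (0:ℝ) < (i : ℝ) + b + 1 := by positivity
        field_simp
    _ ≤ (2 ^ p * a / (p - 1)) * b ^ (1 - p) := by
        apply mul_le_mul_of_nonneg_left (aux_sum hp hb d)
        positivity
    _ = 2 ^ p / (p - 1) * (a * b ^ (1 - p)) := by ring
    _ = 2 ^ p / (p - 1) * a ^ (1/p) := by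
        rw [show a * b ^ (1-p) = b by
          rw [← hbp, ← Real.rpow_add hb]; norm_num]

/-- Truncated-trace bound under polynomial eigenvalue decay. -/
theorem trace_truncation_bound (C p : ℝ) (hC : 0 < C) (hp : 1 < p) :
    ∃ c : ℝ, 0 < c ∧
      ∀ (d : ℕ) (σ : ℝ), 0 < σ →
        ∀ (A : Matrix (Fin d) (Fin d) ℂ) (hA : A.PosSemidef),
          (∀ i : Fin d, hA.1.eigenvalues i ≤ C * σ ^ 2 / ((i : ℝ) + 1) ^ p) →
          ∀ t : ℝ, 0 < t →
            (matFun (fun s => min (-s) 1) (-(t / σ ^ 2) • A)).trace.re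
              ≤ min (d : ℝ) (c * t ^ (1 / p)) := by
  have h2p : (0:ℝ) < 2 ^ p := Real.rpow_pos_of_pos (by norm_num) p
  have hCp : (0:ℝ) < C ^ (1/p) := Real.rpow_pos_of_pos hC _
  refine ⟨2 ^ p / (p - 1) * C ^ (1/p), mul_pos (div_pos h2p (by linarith)) hCp, ?_⟩
  intro d σ hσ A hA hEig t ht
  have hf : Continuous fun s : ℝ => min (-s) 1 := by fun_prop
  rw [matFun_smul_trace_re _ hf _ A hA.1]
  have hσ2 : (0:ℝ) < σ ^ 2 := by positivity
  -- each term equals min ((t/σ²)·λᵢ) 1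
  have hterm : ∀ i : Fin d, min (-(-(t / σ ^ 2) * hA.1.eigenvalues i)) 1
      = min ((t / σ ^ 2) * hA.1.eigenvalues i) 1 := by
    intro i; ring_nf
  refine le_min ?_ ?_
  · -- bound by d
    calc ∑ i : Fin d, min (-(-(t / σ ^ 2) * hA.1.eigenvalues i)) 1
        ≤ ∑ _i : Fin d, (1:ℝ) := Finset.sum_le_sum fun i _ => min_le_right _ _
      _ = (d : ℝ) := by simp
  · -- bound by c * t^(1/p)
    have hCt : (0:ℝ) < C * t := by positivity
    calc ∑ i : Fin d, min (-(-(t / σ ^ 2) * hA.1.eigenvalues i)) 1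
        ≤ ∑ i : Fin d, min ((C * t) / (((i : ℕ) : ℝ) + 1) ^ p) 1 := by
          apply Finset.sum_le_sum
          intro i _
          rw [hterm i]
          apply min_le_min _ le_rfl
          have h1 : hA.1.eigenvalues i ≤ C * σ ^ 2 / ((i : ℝ) + 1) ^ p := hEig i
          have h2 : (t / σ ^ 2) * hA.1.eigenvalues i
              ≤ (t / σ ^ 2) * (C * σ ^ 2 / ((i : ℝ) + 1) ^ p) :=
            mul_le_mul_of_nonneg_left h1 (by positivity)
          refine h2.trans_eq ?_
          have hpow : (0:ℝ) < ((i : ℝ) + 1) ^ p := by positivity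
          field_simp
      _ = ∑ i ∈ Finset.range d, min ((C * t) / ((i : ℝ) + 1) ^ p) 1 :=
          Fin.sum_univ_eq_sum_range (fun i => min ((C * t) / ((i : ℝ) + 1) ^ p) 1) d
      _ ≤ 2 ^ p / (p - 1) * (C * t) ^ (1/p) := aux_main hp hCt d
      _ = 2 ^ p / (p - 1) * C ^ (1/p) * t ^ (1/p) := by
          rw [Real.mul_rpow hC.le ht.le]; ring
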